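/- For any tree T on n ≥ 2 vertices, b(T) ≤ b(C_{2(n−1)}), where C_{2(n−1)} is the cycle on 2(n−1) vertices; consequently b(T) ≤ ⌈√(2(n−1))⌉. -/

import Mathlib

open SimpleGraph
open scoped Classical

/-- Burning number: least `k` such that there are fire sources `v₀,…,v_{k-1}` with
`⋃_{r=0}^{k-1} B_r(v_r) = V`. -/
noncomputable def burningNumber (V : Type*) [Fintype V] (G : SimpleGraph V) : ℕ :=
  sInf {k | ∃ v : Fin k → V, ∀ u : V, ∃ r : Fin k, G.dist (v r) u ≤ (r : ℕ)}

/-- Covering number `b̂`: least `k` such that `k` balls of radius `k` cover `V`. -/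
noncomputable def coverNumber (V : Type*) [Fintype V] (G : SimpleGraph V) : ℕ :=
  sInf {k | ∃ v : Fin k → V, ∀ u : V, ∃ i : Fin k, G.dist (v i) u ≤ k}

universe u

variable {V : Type u}

lemma exists_neighbor [Fintype V] {G : SimpleGraph V} (hc : G.Connected)
    (h2 : 2 ≤ Fintype.card V) (v : V) : ∃ u, G.Adj v u := by
  obtain ⟨w, hw⟩ := Fintype.exists_ne_of_one_lt_card (by omega) v
  obtain ⟨p⟩ := hc v w
  cases p with
  | nil => exact absurd rfl hw.symm
  | cons h q => exact ⟨_, h⟩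

lemma tree_exists_leaf [Fintype V] {G : SimpleGraph V} (hG : G.IsTree)
    (h2 : 2 ≤ Fintype.card V) : ∃ v u : V, G.Adj v u ∧ ∀ w, G.Adj v w → w = u := by
  have hedge := hG.card_edgeFinset
  have hsum := G.sum_degrees_eq_twice_card_edges
  -- some vertex has degree ≤ 1
  by_contra hcon
  push_neg at hcon
  have hdeg : ∀ v : V, 2 ≤ G.degree v := by
    intro v
    obtain ⟨u, hu⟩ := exists_neighbor hG.isConnected h2 v
    obtain ⟨w, hw, hwu⟩ := hcon v u hu
    have hu' : u ∈ G.neighborFinset v := by simpa using hu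
    have hw' : w ∈ G.neighborFinset v := by simpa using hw
    have : ({u, w} : Finset V) ⊆ G.neighborFinset v := by
      intro x hx; simp at hx; rcases hx with rfl | rfl <;> assumption
    calc 2 = ({u, w} : Finset V).card := (Finset.card_pair (Ne.symm hwu)).symm
    _ ≤ _ := Finset.card_le_card this
  have : 2 * Fintype.card V ≤ ∑ v, G.degree v := by
    rw [two_mul]
    calc Fintype.card V + Fintype.card V = ∑ _v : V, 2 := by
          simp [Finset.sum_const]; ring
    _ ≤ _ := Finset.sum_le_sum (fun v _ => hdeg v)
  rw [hsum] at this
  omega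

lemma getVert_mem_support {a b : V} {G : SimpleGraph V} (p : G.Walk a b) (i : ℕ) :
    p.getVert i ∈ p.support := by
  rcases le_or_gt i p.length with h | h
  · exact Walk.mem_support_iff_exists_getVert.2 ⟨i, rfl, h⟩
  · rw [p.getVert_of_length_le h.le]; exact p.end_mem_support

lemma path_avoids_leaf {G : SimpleGraph V} {v u : V}
    (hleaf : ∀ w, G.Adj v w → w = u) {a b : V} (p : G.Walk a b) (hp : p.IsPath)
    (ha : a ≠ v) (hb : b ≠ v) : v ∉ p.support := by
  intro hv
  set t := p.takeUntil v hv with ht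
  set d := p.dropUntil v hv with hd
  have hspec : t.append d = p := p.take_spec hv
  have htp : t.IsPath := hp.takeUntil hv
  have hdp : d.IsPath := hp.dropUntil hv
  have htl : 1 ≤ t.length := by
    rcases Nat.eq_zero_or_pos t.length with h0 | h0
    · exact absurd (by simpa using (Walk.eq_of_length_eq_zero h0)) ha
    · exact h0
  have hdl : 1 ≤ d.length := by
    rcases Nat.eq_zero_or_pos d.length with h0 | h0
    · exact absurd (by simpa using (Walk.eq_of_length_eq_zero h0).symm) hb
    · exact h0
  -- penultimate vertex of t is u
  have hx : t.getVert (t.length - 1) = u := by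
    have hadj := t.adj_getVert_succ (i := t.length - 1) (by omega)
    rw [show t.length - 1 + 1 = t.length by omega, t.getVert_length] at hadj
    exact hleaf _ hadj.symm
  -- second vertex of d is u
  have hy : d.getVert 1 = u := by
    have hadj := d.adj_getVert_succ (i := 0) (by omega)
    rw [d.getVert_zero] at hadj
    exact hleaf _ hadj
  have hut : u ∈ t.support := hx ▸ getVert_mem_support t (t.length - 1)
  have hud : u ∈ d.support := hy ▸ getVert_mem_support d 1
  have huv : u ≠ v := by
    obtain ⟨z, hz⟩ : ∃ z, G.Adj v z := by
      have hadj := d.adj_getVert_succ (i := 0) (by omega)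
      rw [d.getVert_zero] at hadj; exact ⟨_, hadj⟩
    have hvu : G.Adj v u := (hleaf z hz) ▸ hz
    exact hvu.ne'
  have hud' : u ∈ d.support.tail := by
    have := d.support_eq_cons
    rw [this] at hud
    rcases hud with _ | h
    · exact absurd rfl huv
    · assumption
  -- contradiction with nodup support of p
  have hnodup : (t.append d).support.Nodup := by rw [hspec]; exact hp.support_nodup
  rw [Walk.support_append] at hnodup
  exact (List.disjoint_of_nodup_append hnodup) hut hud'

lemma reachable_induce_of_walk {G : SimpleGraph V} (s : Set V) :
    ∀ {a b : V} (p : G.Walk a b) (hp : ∀ x ∈ p.support, x ∈ s),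
      (G.induce s).Reachable ⟨a, hp a p.start_mem_support⟩ ⟨b, hp b p.end_mem_support⟩ := by
  intro a b p
  induction p with
  | nil => intro hp; rfl
  | @cons a c b h q ih =>
    intro hp
    have hcs : c ∈ (Walk.cons h q).support := by
      rw [Walk.support_cons]; exact List.mem_cons_of_mem _ q.start_mem_support
    have h1 : (G.induce s).Adj ⟨a, hp _ (Walk.start_mem_support _)⟩ ⟨c, hp _ hcs⟩ := h
    exact (h1.reachable).trans (ih fun x hx => hp x
      (by rw [Walk.support_cons]; exact List.mem_cons_of_mem _ hx))

lemma induced_tree_of_leaf [Fintype V] {G : SimpleGraph V} (hG : G.IsTree) {v u : V}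
    (hadj : G.Adj v u) (hleaf : ∀ w, G.Adj v w → w = u) :
    (G.induce {w | w ≠ v}).IsTree := by
  constructor
  · have hne : Nonempty {w | w ≠ v} := ⟨⟨u, hadj.ne'⟩⟩
    refine Connected.mk (fun a b => ?_)
    obtain ⟨p⟩ := hG.isConnected a.1 b.1
    have hp := p.toPath.2
    have hav : v ∉ (p.toPath : G.Walk a.1 b.1).support :=
      path_avoids_leaf hleaf _ hp a.2 b.2
    have key := reachable_induce_of_walk {w | w ≠ v} (p.toPath : G.Walk a.1 b.1)
      (fun x hx => by rintro rfl; exact hav hx)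
    exact (by simpa using key)
  · intro x c hc
    have := hc.map (f := (SimpleGraph.Embedding.induce {w | w ≠ v}).toHom)
      Subtype.val_injective
    exact hG.IsAcyclic _ this

lemma tree_spanning_closed_walk :
    ∀ (N : ℕ) (V : Type u) [Fintype V] (G : SimpleGraph V), G.IsTree →
      Fintype.card V = N →
      ∃ (r : V) (w : G.Walk r r), w.length = 2 * (N - 1) ∧ ∀ x : V, x ∈ w.support := by
  intro N
  induction N using Nat.strong_induction_on with
  | _ N ih =>
    intro V _ G hG hcard
    have hne : Nonempty V := hG.isConnected.nonempty
    rcases lt_or_ge N 2 with hN | hN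
    · -- N = 1
      have hN1 : N = 1 := by
        have : 0 < Fintype.card V := Fintype.card_pos
        omega
      obtain ⟨r⟩ := hne
      refine ⟨r, Walk.nil, by simp [hN1], fun x => ?_⟩
      have : x = r := by
        have hsub : Subsingleton V := by
          rw [← Fintype.card_le_one_iff_subsingleton]; omega
        exact Subsingleton.elim x r
      simp [this]
    · -- N ≥ 2
      obtain ⟨v, u, hadj, hleaf⟩ := tree_exists_leaf hG (by omega)
      set s : Set V := {w | w ≠ v} with hs
      have hG' : (G.induce s).IsTree := induced_tree_of_leaf hG hadj hleaf
      have hcard' : Fintype.card s = N - 1 := by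
        have := Set.card_ne_eq v
        rw [hcard] at this
        exact (Fintype.card_congr (Equiv.subtypeEquivRight (fun x => Iff.rfl))).trans this
      obtain ⟨r', w', hw'len, hw'supp⟩ := ih (N - 1) (by omega) s (G.induce s) hG' hcard'
      -- map the walk into G
      let f := (SimpleGraph.Embedding.induce s (G := G)).toHom
      let W : G.Walk r'.1 r'.1 := w'.map f
      have hWlen : W.length = 2 * (N - 1 - 1) := by
        show (w'.map f).length = _; rw [Walk.length_map]; exact hw'len
      have hWsupp : ∀ x : V, x ≠ v → x ∈ W.support := by
        intro x hx
        have : (⟨x, hx⟩ : s) ∈ w'.support := hw'supp _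
        show x ∈ (w'.map f).support
        rw [Walk.support_map]
        exact List.mem_map_of_mem this
      have huW : u ∈ W.support := hWsupp u hadj.ne'
      let W2 : G.Walk u u := W.rotate u huW
      have hW2len : W2.length = 2 * (N - 1 - 1) := by
        rw [← hWlen]
        have h1 := (W.rotate_darts u huW).perm.length_eq
        rw [Walk.length_darts, Walk.length_darts] at h1
        exact h1
      have hW2supp : ∀ x : V, x ≠ v → x ∈ W2.support := by
        intro x hx
        have hxW : x ∈ W.support := hWsupp x hx
        rw [← W.take_spec huW, Walk.mem_support_append_iff] at hxW
        rw [show W2 = (W.dropUntil u huW).append (W.takeUntil u huW) from rfl,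
          Walk.mem_support_append_iff]
        tauto
      refine ⟨u, Walk.cons hadj.symm (Walk.cons hadj W2), by simp [hW2len]; omega, ?_⟩
      intro x
      rcases eq_or_ne x v with rfl | hx
      · simp
      · simp [hW2supp x hx]

lemma dist_getVert_le {G : SimpleGraph V} (hc : G.Connected) {r : V} (w : G.Walk r r) :
    ∀ (d a : ℕ), G.dist (w.getVert a) (w.getVert (a + d)) ≤ d := by
  intro d
  induction d with
  | zero => simp
  | succ d ihd =>
    intro a
    have h1 : G.dist (w.getVert (a + d)) (w.getVert (a + d + 1)) ≤ 1 := by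
      rcases lt_or_ge (a + d) w.length with h | h
      · exact (SimpleGraph.dist_le (Walk.cons (w.adj_getVert_succ h) Walk.nil)).trans (by simp)
      · rw [w.getVert_of_length_le h, w.getVert_of_length_le (by omega)]
        simp [SimpleGraph.dist_self]
    have h2 := ihd a
    have h3 : G.dist (w.getVert a) (w.getVert (a + (d + 1))) ≤
        G.dist (w.getVert a) (w.getVert (a + d)) + G.dist (w.getVert (a + d)) (w.getVert (a + d + 1)) := by
      rw [show a + (d + 1) = a + d + 1 by omega]
      exact hc.dist_triangle
    omega

theorem burning_tree_le_cycle {V : Type*} [Fintype V] (G : SimpleGraph V) (hG : G.IsTree)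
    (n : ℕ) (hn : Fintype.card V = n) (h2 : 2 ≤ n) :
    burningNumber V G ≤
        burningNumber (Fin (2 * (n - 1))) (SimpleGraph.cycleGraph (2 * (n - 1))) ∧
      burningNumber V G ≤ ⌈Real.sqrt (2 * (n - 1) : ℕ)⌉₊ := by
  set m := 2 * (n - 1) with hm
  have hm2 : 2 ≤ m := by omega
  obtain ⟨r, w, hwlen, hwsupp⟩ := tree_spanning_closed_walk n V G hG hn
  have hwl : w.length = m := hwlen
  set F : Fin m → V := fun i => w.getVert i.1 with hF
  have hFsurj : ∀ x : V, ∃ i : Fin m, F i = x := by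
    intro x
    obtain ⟨j, hj, hjle⟩ := Walk.mem_support_iff_exists_getVert.1 (hwsupp x)
    rcases lt_or_eq_of_le hjle with h | h
    · exact ⟨⟨j, by omega⟩, hj⟩
    · refine ⟨⟨0, by omega⟩, ?_⟩
      show w.getVert 0 = x
      rw [Walk.getVert_zero]
      rw [h, Walk.getVert_length] at hj
      exact hj
  have lip : ∀ a b : ℕ, a ≤ b → G.dist (w.getVert a) (w.getVert b) ≤ b - a := by
    intro a b hab
    have := dist_getVert_le hG.isConnected w (b - a) a
    rwa [show a + (b - a) = b by omega] at this
  have hadjf : ∀ j : ℕ, j < m → G.Adj (w.getVert j) (w.getVert ((j + 1) % m)) := by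
    intro j hj
    rcases lt_or_eq_of_le (show j + 1 ≤ m by omega) with h | h
    · rw [Nat.mod_eq_of_lt h]
      exact w.adj_getVert_succ (by omega)
    · have h1 := w.adj_getVert_succ (show j < w.length by omega)
      rw [show j + 1 = w.length by omega, Walk.getVert_length] at h1
      rw [h, Nat.mod_self, Walk.getVert_zero]
      exact h1
  haveI : NeZero m := ⟨by omega⟩
  have key : ∀ a b : Fin m, (b - a).1 = 1 → G.Adj (F a) (F b) := by
    intro a b hba
    have hb : b.1 = (a.1 + 1) % m := by
      have h := sub_add_cancel b a
      have h2 : (b - a + a).1 = ((b - a).1 + a.1) % m := by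
        rw [Fin.add_def]
      rw [h, hba] at h2
      rw [h2, Nat.add_comm]
    show G.Adj (w.getVert a.1) (w.getVert b.1)
    rw [hb]
    exact hadjf a.1 a.isLt
  let φ : SimpleGraph.cycleGraph m →g G :=
    ⟨F, by
      intro a b hab
      rw [SimpleGraph.cycleGraph_adj'] at hab
      rcases hab with h | h
      · exact (key b a h).symm
      · exact key a b h⟩
  have hconn : (SimpleGraph.cycleGraph m).Connected := by
    haveI : Nonempty (Fin m) := ⟨⟨0, by omega⟩⟩
    exact SimpleGraph.Connected.mk SimpleGraph.cycleGraph_preconnected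
  have hdist : ∀ a b : Fin m, G.dist (F a) (F b) ≤ (SimpleGraph.cycleGraph m).dist a b := by
    intro a b
    obtain ⟨p, hp⟩ := hconn.exists_walk_length_eq_dist a b
    calc G.dist (F a) (F b) ≤ (p.map φ).length := SimpleGraph.dist_le _
    _ = p.length := Walk.length_map φ p
    _ = _ := hp
  constructor
  · -- part 1
    have hSne : ({k | ∃ v : Fin k → Fin m, ∀ u : Fin m, ∃ r : Fin k,
        (SimpleGraph.cycleGraph m).dist (v r) u ≤ (r : ℕ)}).Nonempty := by
      refine ⟨m, id, fun u => ⟨u, ?_⟩⟩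
      simp [SimpleGraph.dist_self]
    have hmem := Nat.sInf_mem hSne
    obtain ⟨ws, hws⟩ := hmem
    rw [burningNumber]
    apply Nat.sInf_le
    refine ⟨fun i => F (ws i), fun u => ?_⟩
    obtain ⟨x, hx⟩ := hFsurj u
    obtain ⟨i, hi⟩ := hws x
    refine ⟨i, ?_⟩
    rw [← hx]
    exact (hdist (ws i) x).trans hi
  · -- part 2
    rw [burningNumber]
    apply Nat.sInf_le
    refine ⟨fun i => F ⟨min (i.1 * i.1 + i.1) (m - 1), by omega⟩, fun u => ?_⟩
    obtain ⟨x, hx⟩ := hFsurj u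
    set s0 := Nat.sqrt x.1 with hs0
    have hs1 : s0 * s0 ≤ x.1 := Nat.sqrt_le x.1
    have hs2 : x.1 ≤ s0 * s0 + 2 * s0 := by
      have := Nat.lt_succ_sqrt x.1
      nlinarith [this]
    have hxm : x.1 ≤ m - 1 := by have := x.isLt; omega
    have hs0k : s0 < ⌈Real.sqrt (m : ℕ)⌉₊ := by
      by_contra hcon
      push_neg at hcon
      have h1 : Real.sqrt (m : ℕ) ≤ (s0 : ℝ) := by
        have := Nat.ceil_le.1 hcon
        exact_mod_cast this
      have h2 : ((m : ℕ) : ℝ) ≤ (s0 : ℝ) * (s0 : ℝ) := by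
        nlinarith [Real.sq_sqrt (show (0:ℝ) ≤ ((m : ℕ) : ℝ) by positivity),
          Real.sqrt_nonneg ((m : ℕ) : ℝ)]
      have h3 : m ≤ s0 * s0 := by exact_mod_cast h2
      omega
    refine ⟨⟨s0, hs0k⟩, ?_⟩
    show G.dist (w.getVert (min (s0 * s0 + s0) (m - 1))) u ≤ s0
    rw [← hx]
    show G.dist (w.getVert (min (s0 * s0 + s0) (m - 1))) (w.getVert x.1) ≤ s0
    set p := min (s0 * s0 + s0) (m - 1) with hp
    rcases le_or_gt p x.1 with hle | hlt
    · have := lip p x.1 hle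
      have hb : x.1 - p ≤ s0 := by omega
      omega
    · rw [SimpleGraph.dist_comm]
      have := lip x.1 p hlt.le
      have hb : p - x.1 ≤ s0 := by omega
      omega
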